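/- The sequence of natural numbers (n)_{n≥1}, viewed as elements of ℤ_p, has α-Poissonian pair correlations for every 0 < α < 1. -/

import Mathlib

open Filter Finset MeasureTheory
open scoped Classical

variable (p : ℕ) [hp : Fact p.Prime]

/-- The `i`-th base-`p` digit of a `p`-adic integer. -/
noncomputable def digit (x : ℤ_[p]) (i : ℕ) : ℕ := x.appr (i + 1) / p ^ i % p

/-- The Monna map `φ : ℤ_p → [0,1]`, `φ(Σ aᵢ pⁱ) = Σ aᵢ p^{-i-1}`. -/
noncomputable def monna (x : ℤ_[p]) : ℝ := ∑' i : ℕ, (digit p x i : ℝ) / (p : ℝ) ^ (i + 1)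

/-- Distance of a real number to its nearest integer. -/
noncomputable def nearestDist (x : ℝ) : ℝ := |x - round x|

/-- A real sequence in `[0,1)` has `α`-Poissonian pair correlations. -/
noncomputable def realPPC (α : ℝ) (y : ℕ → ℝ) : Prop :=
  ∀ s : ℝ, 0 ≤ s → Tendsto (fun N : ℕ =>
    (((Finset.Icc 1 N ×ˢ Finset.Icc 1 N).filter
      (fun q : ℕ × ℕ => q.1 ≠ q.2 ∧ nearestDist (y q.1 - y q.2) ≤ s / (N : ℝ) ^ α)).card : ℝ)
      / (N : ℝ) ^ (2 - α)) atTop (nhds (2 * s))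

/-- A `p`-adic sequence has `α`-Poissonian pair correlations with respect to the
(normalized) Haar measure `μ` on `ℤ_p`. -/
noncomputable def padicPPC [MeasurableSpace ℤ_[p]] (μ : Measure ℤ_[p]) (α : ℝ)
    (x : ℕ → ℤ_[p]) : Prop :=
  ∀ s : ℝ, 0 < s → Tendsto (fun N : ℕ =>
    (((Finset.Icc 1 N ×ˢ Finset.Icc 1 N).filter
      (fun q : ℕ × ℕ => q.1 ≠ q.2 ∧ ‖x q.1 - x q.2‖ ≤ s / (N : ℝ) ^ α)).card : ℝ)
      / ((N : ℝ) ^ 2 * (μ {z : ℤ_[p] | ‖z‖ ≤ s / (N : ℝ) ^ α}).toReal)) atTop (nhds 1)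

/-- The `i`-th base-`p` digit of a real number in `[0,1)`. -/
noncomputable def realDigit (y : ℝ) (i : ℕ) : ℕ := (⌊y * (p : ℝ) ^ (i + 1)⌋ % p).toNat

/-- The inverse Monna map `φ⁻¹ : [0,1) → ℤ_p`, built from the base-`p` digits of `y`
(the floor-digit expansion, which has `aᵢ ≠ p-1` infinitely often). -/
noncomputable def invMonna (y : ℝ) : ℤ_[p] := ∑' i : ℕ, (realDigit p y i : ℤ_[p]) * (p : ℤ_[p]) ^ i


open scoped ENNReal

section auxPPC
variable (p : ℕ) [hp : Fact p.Prime]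


lemma measure_ball_pow [MeasurableSpace ℤ_[p]] [BorelSpace ℤ_[p]]
    (μ : Measure ℤ_[p]) [μ.IsAddHaarMeasure] (hμ : μ Set.univ = 1) (n : ℕ) :
    μ {z : ℤ_[p] | ‖z‖ ≤ (p : ℝ) ^ (-(n : ℤ))} = ((p : ℝ≥0∞) ^ n)⁻¹ := by
  set S : Set ℤ_[p] := {z : ℤ_[p] | ‖z‖ ≤ (p : ℝ) ^ (-(n : ℤ))} with hS
  have hSm : MeasurableSet S := (isClosed_le continuous_norm continuous_const).measurableSet
  have hne : NeZero (p ^ n) := ⟨pow_ne_zero n hp.out.ne_zero⟩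
  -- fibers
  have hfiber : ∀ c : ZMod (p ^ n),
      {x : ℤ_[p] | PadicInt.toZModPow n x = c} = (fun x => x + -((c.val : ℕ) : ℤ_[p])) ⁻¹' S := by
    intro c
    ext x
    simp only [Set.mem_setOf_eq, Set.mem_preimage, hS, Set.mem_setOf_eq]
    rw [PadicInt.norm_le_pow_iff_mem_span_pow, ← PadicInt.ker_toZModPow, RingHom.mem_ker]
    rw [map_add, map_neg, map_natCast, add_neg_eq_zero]
    haveI := hne
    rw [ZMod.natCast_rightInverse c]
  have hfm : ∀ c : ZMod (p ^ n), μ {x : ℤ_[p] | PadicInt.toZModPow n x = c} = μ S := by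
    intro c
    rw [hfiber c]
    exact measure_preimage_add_right μ _ S
  have hunion : Set.univ = ⋃ c : ZMod (p ^ n), {x : ℤ_[p] | PadicInt.toZModPow n x = c} := by
    ext x; simp
  have hdisj : Pairwise (Function.onFun Disjoint
      (fun c : ZMod (p ^ n) => {x : ℤ_[p] | PadicInt.toZModPow n x = c})) := by
    intro a b hab
    simp only [Function.onFun, Set.disjoint_left]
    rintro x ha hb
    exact hab (ha ▸ hb ▸ rfl)
  have hmeas : ∀ c : ZMod (p ^ n),
      MeasurableSet {x : ℤ_[p] | PadicInt.toZModPow n x = c} := by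
    intro c
    rw [hfiber c]
    exact hSm.preimage (measurable_add_const _)
  have h1 : (1 : ℝ≥0∞) = (p : ℝ≥0∞) ^ n * μ S := by
    rw [← hμ, hunion, measure_iUnion hdisj hmeas, tsum_fintype]
    simp only [hfm, Finset.sum_const, Finset.card_univ, ZMod.card, nsmul_eq_mul]
    push_cast
    ring
  have hp0 : ((p : ℝ≥0∞) ^ n) ≠ 0 := by
    simp [hp.out.ne_zero]
  have hptop : ((p : ℝ≥0∞) ^ n) ≠ ⊤ := by
    simp [ENNReal.pow_ne_top, ENNReal.natCast_ne_top]
  calc μ S = ((p:ℝ≥0∞)^n)⁻¹ * ((p:ℝ≥0∞)^n * μ S) := by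
        rw [← mul_assoc, ENNReal.inv_mul_cancel hp0 hptop, one_mul]
    _ = ((p:ℝ≥0∞)^n)⁻¹ := by rw [← h1, mul_one]


lemma ball_radius (ε : ℝ) (hε0 : 0 < ε) (hε1 : ε < 1) :
    ∃ n : ℕ, 1 ≤ n ∧ (∀ z : ℤ_[p], ‖z‖ ≤ ε ↔ ‖z‖ ≤ (p : ℝ) ^ (-(n : ℤ))) ∧
      (p : ℝ) ^ (-(n : ℤ)) ≤ ε ∧ ε < (p : ℝ) * (p : ℝ) ^ (-(n : ℤ)) := by
  have hp1 : (1 : ℝ) < (p : ℝ) := by exact_mod_cast hp.out.one_lt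
  have hex : ∃ k : ℕ, (p : ℝ) ^ (-(k : ℤ)) ≤ ε := by
    obtain ⟨k, hk⟩ := PadicInt.exists_pow_neg_lt p hε0
    exact ⟨k, hk.le⟩
  set n := Nat.find hex with hn
  have h1 : (p : ℝ) ^ (-(n : ℤ)) ≤ ε := Nat.find_spec hex
  have hn1 : 1 ≤ n := by
    rcases Nat.eq_zero_or_pos n with h | h
    · exfalso
      rw [h] at h1
      norm_num at h1
      linarith
    · exact h
  have hmin : ¬((p : ℝ) ^ (-((n - 1 : ℕ) : ℤ)) ≤ ε) := Nat.find_min hex (by omega)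
  push_neg at hmin
  have hcast : (-((n - 1 : ℕ) : ℤ)) = -(n : ℤ) + 1 := by
    have : ((n - 1 : ℕ) : ℤ) = (n : ℤ) - 1 := by
      omega
    rw [this]; ring
  rw [hcast] at hmin
  refine ⟨n, hn1, ?_, h1, ?_⟩
  · intro z
    constructor
    · intro h
      rw [PadicInt.norm_le_pow_iff_norm_lt_pow_add_one]
      exact lt_of_le_of_lt h hmin
    · intro h
      exact h.trans h1
  · calc ε < (p : ℝ) ^ (-(n : ℤ) + 1) := hmin
      _ = (p : ℝ) * (p : ℝ) ^ (-(n : ℤ)) := by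
        rw [zpow_add₀ (by positivity : (p:ℝ) ≠ 0), zpow_one]
        ring

lemma fiber_card_bounds (N m : ℕ) (hm : 0 < m) (i : ℕ) :
    N / m ≤ ((Finset.Icc 1 N).filter fun j : ℕ => ((i : ZMod m) = (j : ZMod m))).card ∧
    ((Finset.Icc 1 N).filter fun j : ℕ => ((i : ZMod m) = (j : ZMod m))).card ≤ N / m + 1 := by
  constructor
  · -- lower bound: t ↦ r' + t*m from range (N/m)
    set r := i % m with hr
    set r' := if r = 0 then m else r with hr'
    have hr'1 : 1 ≤ r' := by
      simp only [hr']; split <;> omega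
    have hr'm : r' ≤ m := by
      have : r < m := Nat.mod_lt _ hm
      rcases Nat.eq_zero_or_pos r with h | h
      · simp [hr', h]
      · simp only [hr']; split <;> omega
    have hr'mod : r' % m = r := by
      have hrm : r < m := Nat.mod_lt _ hm
      rcases Nat.eq_zero_or_pos r with h | h
      · simp [hr', h]
      · have : r' = r := by simp only [hr']; split <;> omega
        rw [this, Nat.mod_eq_of_lt hrm]
    have := Finset.card_le_card_of_injOn (f := fun t => r' + t * m)
      (s := Finset.range (N / m))
      (t := (Finset.Icc 1 N).filter fun j : ℕ => ((i : ZMod m) = (j : ZMod m)))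
      ?_ ?_
    · simpa using this
    · intro t ht
      simp only [Finset.mem_coe, Finset.mem_range] at ht
      simp only [Finset.mem_coe, Finset.mem_filter, Finset.mem_Icc]
      refine ⟨⟨by omega, ?_⟩, ?_⟩
      · have h1 : r' + t * m ≤ (t + 1) * m := by ring_nf; omega
        have h2 : (t + 1) * m ≤ (N / m) * m := Nat.mul_le_mul_right _ (by omega)
        have h3 : (N / m) * m ≤ N := Nat.div_mul_le_self N m
        omega
      · rw [ZMod.natCast_eq_natCast_iff']
        rw [Nat.add_mul_mod_self_right, hr'mod]
    · intro a _ b _ hab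
      exact Nat.eq_of_mul_eq_mul_right hm (Nat.add_left_cancel hab)
  · -- upper bound: j ↦ j / m into range (N/m + 1)
    have := Finset.card_le_card_of_injOn (f := fun j => j / m)
      (s := (Finset.Icc 1 N).filter fun j : ℕ => ((i : ZMod m) = (j : ZMod m)))
      (t := Finset.range (N / m + 1)) ?_ ?_
    · simpa using this
    · intro j hj
      simp only [Finset.mem_coe, Finset.mem_filter, Finset.mem_Icc] at hj
      simp only [Finset.mem_coe, Finset.mem_range]
      have := Nat.div_le_div_right (c := m) hj.1.2
      omega
    · intro a ha b hb hab
      simp only [Finset.mem_coe, Finset.mem_filter, Finset.mem_Icc,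
        ZMod.natCast_eq_natCast_iff'] at ha hb
      have hmod : a % m = b % m := by rw [← ha.2, ← hb.2]
      have hd : a / m = b / m := hab
      have h1 := Nat.div_add_mod a m
      have h2 := Nat.div_add_mod b m
      rw [hd, hmod] at h1
      omega

lemma count_eq (N m : ℕ) (hm : 0 < m) :
    ((Finset.Icc 1 N ×ˢ Finset.Icc 1 N).filter
        fun q : ℕ × ℕ => q.1 ≠ q.2 ∧ ((q.1 : ZMod m) = (q.2 : ZMod m))).card + N =
    ((Finset.Icc 1 N ×ˢ Finset.Icc 1 N).filter
        fun q : ℕ × ℕ => ((q.1 : ZMod m) = (q.2 : ZMod m))).card := by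
  set P := Finset.Icc 1 N ×ˢ Finset.Icc 1 N with hP
  have h1 : (P.filter fun q : ℕ × ℕ => ((q.1 : ZMod m) = (q.2 : ZMod m))).filter
      (fun q => q.1 ≠ q.2) = P.filter fun q => q.1 ≠ q.2 ∧ ((q.1 : ZMod m) = (q.2 : ZMod m)) := by
    rw [Finset.filter_filter]
    apply Finset.filter_congr
    intro q _
    tauto
  have h2 : (P.filter fun q : ℕ × ℕ => ((q.1 : ZMod m) = (q.2 : ZMod m))).filter
      (fun q => q.1 = q.2) = P.filter fun q : ℕ × ℕ => q.1 = q.2 := by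
    rw [Finset.filter_filter]
    apply Finset.filter_congr
    intro q _
    constructor
    · tauto
    · intro h; exact ⟨by rw [h], h⟩
  have h3 : (P.filter fun q : ℕ × ℕ => q.1 = q.2) =
      (Finset.Icc 1 N).image (fun i => (i, i)) := by
    ext q
    simp only [Finset.mem_filter, Finset.mem_image, hP, Finset.mem_product]
    constructor
    · rintro ⟨⟨h1, h2⟩, h3⟩
      exact ⟨q.1, h1, Prod.ext rfl h3⟩
    · rintro ⟨a, ha, rfl⟩
      exact ⟨⟨ha, ha⟩, rfl⟩
  have h4 : (P.filter fun q : ℕ × ℕ => q.1 = q.2).card = N := by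
    rw [h3, Finset.card_image_of_injective _ (fun a b h => (Prod.mk.injEq _ _ _ _ ▸ h).1),
      Nat.card_Icc]
    omega
  have := Finset.card_filter_add_card_filter_not
    (s := P.filter fun q : ℕ × ℕ => ((q.1 : ZMod m) = (q.2 : ZMod m)))
    (p := fun q => q.1 = q.2)
  rw [h2] at this
  have h5 : (P.filter fun q : ℕ × ℕ => ((q.1 : ZMod m) = (q.2 : ZMod m))).filter
      (fun q => ¬ q.1 = q.2) = P.filter fun q => q.1 ≠ q.2 ∧ ((q.1 : ZMod m) = (q.2 : ZMod m)) := by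
    rw [Finset.filter_filter]
    apply Finset.filter_congr
    intro q _
    tauto
  rw [h5] at this
  omega

lemma count_total_bounds (N m : ℕ) (hm : 0 < m) :
    N * (N / m) ≤ ((Finset.Icc 1 N ×ˢ Finset.Icc 1 N).filter
        fun q : ℕ × ℕ => ((q.1 : ZMod m) = (q.2 : ZMod m))).card ∧
    ((Finset.Icc 1 N ×ˢ Finset.Icc 1 N).filter
        fun q : ℕ × ℕ => ((q.1 : ZMod m) = (q.2 : ZMod m))).card ≤ N * (N / m + 1) := by
  have hfib := Finset.card_eq_sum_card_fiberwise
    (s := (Finset.Icc 1 N ×ˢ Finset.Icc 1 N).filter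
        fun q : ℕ × ℕ => ((q.1 : ZMod m) = (q.2 : ZMod m)))
    (t := Finset.Icc 1 N) (f := Prod.fst)
    (by intro q hq
        simp only [Finset.mem_coe, Finset.mem_filter, Finset.mem_product] at hq
        exact hq.1.1)
  have hkey : ∀ i ∈ Finset.Icc 1 N,
      (((Finset.Icc 1 N ×ˢ Finset.Icc 1 N).filter
        fun q : ℕ × ℕ => ((q.1 : ZMod m) = (q.2 : ZMod m))).filter
        fun q => q.1 = i).card =
      ((Finset.Icc 1 N).filter fun j : ℕ => ((i : ZMod m) = (j : ZMod m))).card := by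
    intro i hi
    refine Finset.card_bij' (fun q _ => q.2) (fun j _ => (i, j)) ?_ ?_ ?_ ?_
    · intro q hq
      simp only [Finset.mem_filter, Finset.mem_product] at hq ⊢
      obtain ⟨⟨⟨_, h2⟩, h3⟩, h4⟩ := hq
      exact ⟨h2, h4 ▸ h3⟩
    · intro j hj
      simp only [Finset.mem_filter, Finset.mem_product] at hj ⊢
      exact ⟨⟨⟨hi, hj.1⟩, hj.2⟩, trivial⟩
    · intro q hq
      simp only [Finset.mem_filter] at hq
      exact Prod.ext hq.2.symm rfl
    · intro j hj
      rfl
  rw [hfib]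
  constructor
  · calc N * (N / m) = ∑ _i ∈ Finset.Icc 1 N, (N / m) := by
          rw [Finset.sum_const, Nat.card_Icc, smul_eq_mul]; congr 1 <;> omega
      _ ≤ _ := by
          apply Finset.sum_le_sum
          intro i hi
          rw [hkey i hi]
          exact (fiber_card_bounds N m hm i).1
  · calc _ ≤ ∑ _i ∈ Finset.Icc 1 N, (N / m + 1) := by
          apply Finset.sum_le_sum
          intro i hi
          rw [hkey i hi]
          exact (fiber_card_bounds N m hm i).2
      _ = N * (N / m + 1) := by
          rw [Finset.sum_const, Nat.card_Icc, smul_eq_mul]; congr 1 <;> omega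

end auxPPC


section aux
variable (p : ℕ) [hp : Fact p.Prime]

set_option maxHeartbeats 1000000 in
lemma main_bound [MeasurableSpace ℤ_[p]] [BorelSpace ℤ_[p]]
    (μ : Measure ℤ_[p]) [μ.IsAddHaarMeasure] (hμ : μ Set.univ = 1)
    (α : ℝ) (s : ℝ) (hs : 0 < s) (N : ℕ) (hN1 : 1 ≤ N) (hNs : s < (N : ℝ) ^ α) :
    (1 - (2 * p / s) * (N : ℝ) ^ (α - 1) ≤
      (((Finset.Icc 1 N ×ˢ Finset.Icc 1 N).filter
        (fun q : ℕ × ℕ => q.1 ≠ q.2 ∧ ‖((q.1 : ℤ_[p]) : ℤ_[p]) - (q.2 : ℤ_[p])‖ ≤ s / (N : ℝ) ^ α)).card : ℝ)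
        / ((N : ℝ) ^ 2 * (μ {z : ℤ_[p] | ‖z‖ ≤ s / (N : ℝ) ^ α}).toReal)) ∧
      ((((Finset.Icc 1 N ×ˢ Finset.Icc 1 N).filter
        (fun q : ℕ × ℕ => q.1 ≠ q.2 ∧ ‖((q.1 : ℤ_[p]) : ℤ_[p]) - (q.2 : ℤ_[p])‖ ≤ s / (N : ℝ) ^ α)).card : ℝ)
        / ((N : ℝ) ^ 2 * (μ {z : ℤ_[p] | ‖z‖ ≤ s / (N : ℝ) ^ α}).toReal) ≤ 1) := by
  have hX : (1 : ℝ) ≤ (N : ℝ) := by exact_mod_cast hN1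
  have hX0 : (0 : ℝ) < (N : ℝ) := by linarith
  have hA : (0 : ℝ) < (N : ℝ) ^ α := lt_trans hs hNs
  set ε : ℝ := s / (N : ℝ) ^ α with hε
  have hε0 : 0 < ε := div_pos hs hA
  have hε1 : ε < 1 := (div_lt_one hA).mpr hNs
  obtain ⟨n, hn1, hiff, hle, hlt⟩ := ball_radius p ε hε0 hε1
  set m : ℕ := p ^ n with hm
  have hm0 : 0 < m := pow_pos hp.out.pos n
  have hM : ((m : ℕ) : ℝ) = (p : ℝ) ^ n := by push_cast [hm]; ring
  have hMinv : (p : ℝ) ^ (-(n : ℤ)) = ((m : ℕ) : ℝ)⁻¹ := by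
    rw [hM, zpow_neg, zpow_natCast]
  have hM1 : (1 : ℝ) ≤ (m : ℝ) := by exact_mod_cast hm0
  have hM0 : (0 : ℝ) < (m : ℝ) := by linarith
  -- measure of the ball
  have hball : {z : ℤ_[p] | ‖z‖ ≤ ε} = {z : ℤ_[p] | ‖z‖ ≤ (p : ℝ) ^ (-(n : ℤ))} :=
    Set.ext fun z => hiff z
  have hmeas : (μ {z : ℤ_[p] | ‖z‖ ≤ ε}).toReal = ((m : ℝ))⁻¹ := by
    rw [hball, measure_ball_pow p μ hμ n, ENNReal.toReal_inv]
    congr 1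
    simp [ENNReal.toReal_pow, hM]
  -- the condition as a ZMod condition
  have hcond : ∀ q : ℕ × ℕ, (‖((q.1 : ℤ_[p]) : ℤ_[p]) - (q.2 : ℤ_[p])‖ ≤ ε ↔
      ((q.1 : ZMod m) = (q.2 : ZMod m))) := by
    intro q
    have hcast : ((q.1 : ℤ_[p]) : ℤ_[p]) - (q.2 : ℤ_[p]) = (((q.1 : ℤ) - (q.2 : ℤ) : ℤ) : ℤ_[p]) := by
      push_cast; ring
    rw [hcast, hiff, PadicInt.norm_int_le_pow_iff_dvd, ZMod.natCast_eq_natCast_iff,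
      Nat.modEq_iff_dvd]
    have hmz : ((m : ℕ) : ℤ) = (p : ℤ) ^ n := by push_cast [hm]; ring
    rw [hmz]
    exact dvd_sub_comm
  have hcard : ((Finset.Icc 1 N ×ˢ Finset.Icc 1 N).filter
        (fun q : ℕ × ℕ => q.1 ≠ q.2 ∧ ‖((q.1 : ℤ_[p]) : ℤ_[p]) - (q.2 : ℤ_[p])‖ ≤ ε)) =
      ((Finset.Icc 1 N ×ˢ Finset.Icc 1 N).filter
        (fun q : ℕ × ℕ => q.1 ≠ q.2 ∧ ((q.1 : ZMod m) = (q.2 : ZMod m)))) := by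
    apply Finset.filter_congr
    intro q _
    rw [hcond q]
  rw [hcard, hmeas]
  -- counting facts
  set Dc : ℕ := ((Finset.Icc 1 N ×ˢ Finset.Icc 1 N).filter
        (fun q : ℕ × ℕ => q.1 ≠ q.2 ∧ ((q.1 : ZMod m) = (q.2 : ZMod m)))).card with hDc
  set Ec : ℕ := ((Finset.Icc 1 N ×ˢ Finset.Icc 1 N).filter
        (fun q : ℕ × ℕ => ((q.1 : ZMod m) = (q.2 : ZMod m)))).card with hEc
  have hcount : Dc + N = Ec := count_eq N m hm0
  obtain ⟨hlow, hhigh⟩ := count_total_bounds N m hm0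
  set c : ℕ := N / m with hc
  -- real versions
  have F1 : (Dc : ℝ) + (N : ℝ) = (Ec : ℝ) := by exact_mod_cast hcount
  have F2 : (N : ℝ) * (c : ℝ) ≤ (Ec : ℝ) := by exact_mod_cast hlow
  have F3 : (Ec : ℝ) ≤ (N : ℝ) * ((c : ℝ) + 1) := by exact_mod_cast hhigh
  have F4 : (c : ℝ) * (m : ℝ) ≤ (N : ℝ) := by
    exact_mod_cast Nat.div_mul_le_self N m
  have F5n : N < (N / m + 1) * m := by
    have h1 := Nat.div_add_mod N m
    have h2 := Nat.mod_lt N hm0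
    have h3 : (N / m + 1) * m = m * (N / m) + m := by ring
    omega
  have F5 : (N : ℝ) < ((c : ℝ) + 1) * (m : ℝ) := by exact_mod_cast F5n
  have F6 : (m : ℝ) * s ≤ (p : ℝ) * ((N : ℝ) ^ α) := by
    -- from hlt : ε < p * p^{-n}
    rw [hMinv] at hlt
    have : ε * (m : ℝ) < (p : ℝ) := by
      rw [mul_comm] at hlt
      calc ε * (m:ℝ) < ((m : ℝ)⁻¹ * p) * (m : ℝ) := by
            apply mul_lt_mul_of_pos_right hlt hM0
        _ = (p : ℝ) := by field_simp
    have h2 : ε * (m : ℝ) * ((N:ℝ) ^ α) ≤ (p:ℝ) * ((N:ℝ)^α) := by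
      apply mul_le_mul_of_nonneg_right this.le (le_of_lt hA)
    calc (m:ℝ) * s = ε * (m:ℝ) * ((N:ℝ)^α) := by
          rw [hε]; field_simp
      _ ≤ _ := h2
  -- rewrite the quotient
  have hXsq : (0:ℝ) < (N:ℝ)^2 := by positivity
  have hquot : ((Dc : ℝ)) / ((N : ℝ) ^ 2 * ((m : ℝ))⁻¹) = (Dc : ℝ) * (m : ℝ) / (N : ℝ) ^ 2 := by
    rw [show ((N:ℝ)^2 * ((m:ℝ))⁻¹) = (N:ℝ)^2 / (m:ℝ) from by rw [div_eq_mul_inv],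
      div_div_eq_mul_div]
  rw [hquot]
  constructor
  · -- lower bound
    have hR : (N:ℝ) * (c:ℝ) - (N:ℝ) ≤ (Dc : ℝ) := by linarith
    have h1 : ((N:ℝ) * (c:ℝ) - (N:ℝ)) * (m:ℝ) ≤ (Dc:ℝ) * (m:ℝ) :=
      mul_le_mul_of_nonneg_right hR (by linarith)
    have hCM : (N:ℝ) - (m:ℝ) ≤ (c:ℝ) * (m:ℝ) := by nlinarith
    have h2 : (N:ℝ)^2 - 2*(N:ℝ)*(m:ℝ) ≤ ((N:ℝ) * (c:ℝ) - (N:ℝ)) * (m:ℝ) := by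
      nlinarith [mul_nonneg (by linarith : (0:ℝ) ≤ (N:ℝ))
        (by linarith : (0:ℝ) ≤ (c:ℝ)*(m:ℝ) - (N:ℝ) + (m:ℝ))]
    have h3 : (N:ℝ)^2 - 2*(N:ℝ)*(m:ℝ) ≤ (Dc:ℝ) * (m:ℝ) := le_trans h2 h1
    rw [le_div_iff₀ hXsq]
    have heq : (1 - 2 * (p:ℝ) / s * (N:ℝ) ^ (α - 1)) * (N:ℝ)^2 =
        (N:ℝ)^2 - (2 * (p:ℝ) / s) * ((N:ℝ) ^ (α-1) * (N:ℝ)^2) := by ring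
    rw [heq]
    have hrw : (N:ℝ) ^ (α - 1) * (N:ℝ)^2 = ((N:ℝ) ^ α) * (N:ℝ) := by
      rw [Real.rpow_sub hX0, Real.rpow_one]
      field_simp
    rw [hrw]
    have hMb : (m:ℝ) ≤ (p:ℝ) * ((N:ℝ)^α) / s := by
      rw [le_div_iff₀ hs]
      linarith [F6]
    have : 2*(N:ℝ)*(m:ℝ) ≤ 2 * (p:ℝ) / s * ((N:ℝ)^α * (N:ℝ)) := by
      have := mul_le_mul_of_nonneg_left hMb (by linarith : (0:ℝ) ≤ 2*(N:ℝ))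
      calc 2*(N:ℝ)*(m:ℝ) ≤ 2*(N:ℝ) * ((p:ℝ) * ((N:ℝ)^α) / s) := this
        _ = 2 * (p:ℝ) / s * ((N:ℝ)^α * (N:ℝ)) := by field_simp
    linarith
  · -- upper bound
    rw [div_le_one hXsq]
    have hDn : Dc ≤ N * c := by
      have h : N * (c + 1) = N * c + N := by ring
      omega
    have hnat : Dc * m ≤ N * N := by
      calc Dc * m ≤ (N * c) * m := Nat.mul_le_mul_right m hDn
        _ = N * (c * m) := by ring
        _ ≤ N * N := Nat.mul_le_mul_left N (Nat.div_mul_le_self N m)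
    have : (Dc : ℝ) * (m:ℝ) ≤ (N:ℝ) * (N:ℝ) := by exact_mod_cast hnat
    nlinarith
end aux

theorem stmt14 [MeasurableSpace ℤ_[p]] [BorelSpace ℤ_[p]]
    (μ : Measure ℤ_[p]) [μ.IsAddHaarMeasure] (hμ : μ Set.univ = 1)
    (α : ℝ) (hα0 : 0 < α) (hα1 : α < 1) :
    padicPPC p μ α (fun n => (n : ℤ_[p])) := by
  unfold padicPPC
  intro s hs
  have hA : Tendsto (fun N : ℕ => ((N : ℝ)) ^ α) atTop atTop :=
    (tendsto_rpow_atTop hα0).comp tendsto_natCast_atTop_atTop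
  have h0 : Tendsto (fun N : ℕ => ((N : ℝ)) ^ (α - 1)) atTop (nhds 0) := by
    have := (tendsto_rpow_neg_atTop (by linarith : (0:ℝ) < 1 - α)).comp
      (tendsto_natCast_atTop_atTop (R := ℝ))
    simpa [Function.comp_def, neg_sub] using this
  have hg : Tendsto (fun N : ℕ => 1 - (2 * (p:ℝ) / s) * ((N : ℝ)) ^ (α - 1)) atTop (nhds 1) := by
    have h1 := h0.const_mul (2 * (p:ℝ) / s)
    have h2 := (tendsto_const_nhds (x := (1:ℝ)) (f := atTop)).sub h1
    simpa using h2
  have hev : ∀ᶠ N : ℕ in atTop, s < (N : ℝ) ^ α := hA.eventually_gt_atTop s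
  have hev1 : ∀ᶠ N : ℕ in atTop, 1 ≤ N := eventually_ge_atTop 1
  have hboth := (hev1.and hev).mono fun N h => main_bound p μ hμ α s hs N h.1 h.2
  exact tendsto_of_tendsto_of_tendsto_of_le_of_le' hg tendsto_const_nhds
    (hboth.mono fun N h => h.1) (hboth.mono fun N h => h.2)
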